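/- Let B ≥ 2 be an integer, let c be the unique positive solution of e^c = 1 + 2c (c ≈ 1.25643), and let δ ∈ [0,1) satisfy δ < 1 − c/log(B+1). Then the optimal δ-CVaR competitive ratio for discrete-time ski rental with buying cost B is strictly below the deterministic optimum: α_δ^{B,*} < 2 − 1/B. -/

import Mathlib

open Finset Set

/-- Conditional value-at-risk (loss version) of a discrete random variable: the strategy
`p` is a probability vector over `Fin n`, `f` gives the loss of each outcome. For
`δ ∈ [0,1)` it is `inf_t { t + (1-δ)⁻¹ Σ_i p_i max(f_i - t, 0) }`; for `δ = 1` it is the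
maximum loss over the support of `p`. -/
noncomputable def dcvar {n : ℕ} (δ : ℝ) (p : Fin n → ℝ) (f : Fin n → ℝ) : ℝ :=
  if δ = 1 then ⨆ i : {i : Fin n // p i ≠ 0}, f i
  else ⨅ t : ℝ, t + (1 - δ)⁻¹ * ∑ i, p i * max (f i - t) 0

/-- Discrete-time ski rental cost with buying cost `B`: purchase at the start of day
`x+1`, season lasts `s+1` days (indices in `Fin B` represent days `1,…,B`). The cost is
`s` if the player never buys, and `B + x` (i.e. `B + day - 1`) if it buys. -/
noncomputable def dsrCost (B : ℕ) (s x : Fin B) : ℝ :=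
  if (x : ℕ) ≤ (s : ℕ) then (B : ℝ) + (x : ℕ) else (s : ℕ) + 1

/-- `δ`-CVaR competitive ratio of strategy `p` at adversary decision (season length) `s`. -/
noncomputable def dsrRatio (δ : ℝ) (B : ℕ) (p : Fin B → ℝ) (s : Fin B) : ℝ :=
  dcvar δ p (dsrCost B s) / min ((s : ℕ) + 1 : ℝ) (B : ℝ)

/-- `δ`-CVaR competitive ratio of strategy `p`: worst case over adversary decisions. -/
noncomputable def dsrCR (δ : ℝ) (B : ℕ) (p : Fin B → ℝ) : ℝ :=
  ⨆ s : Fin B, dsrRatio δ B p s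

/-- Optimal `δ`-CVaR competitive ratio over all strategies (probability vectors on `[B]`). -/
noncomputable def dsrOpt (δ : ℝ) (B : ℕ) : ℝ :=
  ⨅ p : {q : Fin B → ℝ // (∀ i, 0 ≤ q i) ∧ ∑ i, q i = 1}, dsrCR δ B (p : Fin B → ℝ)


section cfacts
variable {c : ℝ} (hc : 0 < c) (hce : Real.exp c = 1 + 2 * c)

include hc hce in
lemma c_gt_one : 1 < c := by
  by_contra h
  push_neg at h
  have hch := convexOn_exp.2 (Set.mem_univ (0:ℝ)) (Set.mem_univ (1:ℝ))
    (by linarith : (0:ℝ) ≤ 1 - c) hc.le (by ring)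
  simp only [smul_eq_mul, mul_zero, mul_one, Real.exp_zero, zero_add] at hch
  have he : Real.exp 1 < 3 := by linarith [Real.exp_one_lt_d9]
  nlinarith [hch, hce]

include hc hce in
lemma exp_ge_of_ge {u : ℝ} (hu : c ≤ u) : 1 + 2 * u ≤ Real.exp u := by
  have h1 : Real.exp u = Real.exp c * Real.exp (u - c) := by
    rw [← Real.exp_add]; ring_nf
  have h2 : (u - c) + 1 ≤ Real.exp (u - c) := Real.add_one_le_exp _
  have hc1 : 1 < c := c_gt_one hc hce
  have h3 : Real.exp c * ((u - c) + 1) ≤ Real.exp c * Real.exp (u - c) :=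
    mul_le_mul_of_nonneg_left h2 (Real.exp_pos c).le
  rw [hce] at h3
  nlinarith [h3]

include hc hce in
lemma c_gt_98 : 9/8 < c := by
  by_contra h
  push_neg at h
  have h1 := exp_ge_of_ge hc hce (h : c ≤ 9/8)
  have h2 : Real.exp (9/8 : ℝ) = Real.exp 1 * Real.exp (1/8 : ℝ) := by
    rw [← Real.exp_add]; norm_num
  have h3 : (7:ℝ)/8 ≤ Real.exp (-(1/8) : ℝ) := by
    have := Real.add_one_le_exp (-(1/8) : ℝ); linarith
  have h4 : Real.exp (1/8 : ℝ) ≤ 8/7 := by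
    have he := Real.exp_pos (-(1/8):ℝ)
    have : Real.exp (1/8:ℝ) * Real.exp (-(1/8):ℝ) = 1 := by
      rw [← Real.exp_add]; norm_num
    nlinarith
  have h5 : Real.exp 1 < 2.7182818286 := Real.exp_one_lt_d9
  nlinarith [Real.exp_pos (1:ℝ)]

include hc hce in
lemma c_lt_32 : c < 3/2 := by
  by_contra h
  push_neg at h
  have h1 : Real.exp c = Real.exp (3/2 : ℝ) * Real.exp (c - 3/2) := by
    rw [← Real.exp_add]; ring_nf
  have h2 : (c - 3/2) + 1 ≤ Real.exp (c - 3/2) := Real.add_one_le_exp _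
  have h3 : Real.exp (3/2 : ℝ) = Real.exp 1 * Real.exp (1/2 : ℝ) := by
    rw [← Real.exp_add]; norm_num
  have h4 : (3:ℝ)/2 ≤ Real.exp (1/2 : ℝ) := by
    have := Real.add_one_le_exp (1/2 : ℝ); linarith
  have h5 : 2.7182818283 < Real.exp 1 := Real.exp_one_gt_d9
  have h6 : (4:ℝ) < Real.exp (3/2:ℝ) := by
    rw [h3]; nlinarith
  have h7 : Real.exp (3/2:ℝ) * ((c - 3/2) + 1) ≤ Real.exp c := by
    rw [h1]; exact mul_le_mul_of_nonneg_left h2 (Real.exp_pos _).le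
  rw [hce] at h7
  nlinarith

include hc hce in
lemma log3_lt_c : Real.log 3 < c := by
  have h1 : (1:ℝ) < Real.log 3 := by
    have : Real.exp 1 < 3 := by linarith [Real.exp_one_lt_d9]
    calc (1:ℝ) = Real.log (Real.exp 1) := (Real.log_exp 1).symm
    _ < Real.log 3 := Real.log_lt_log (Real.exp_pos 1) this
  by_contra h
  push_neg at h
  have h2 := exp_ge_of_ge hc hce h
  rw [Real.exp_log (by norm_num : (0:ℝ) < 3)] at h2
  linarith

end cfacts

lemma log_chord {z : ℝ} (hz : 1 ≤ z) : 2 * Real.log z ≤ z - z⁻¹ := by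
  rcases eq_or_lt_of_le hz with h | h
  · simp [← h]
  · have hz0 : 0 < z := by linarith
    have h1 : 0 < Real.log z := Real.log_pos h
    have h2 : Real.log z < Real.sinh (Real.log z) := Real.self_lt_sinh_iff.2 h1
    rw [Real.sinh_log hz0] at h2
    linarith

lemma logstep {u : ℝ} (hu : 1 ≤ u) : 1 ≤ (Real.log (u+1) - Real.log u) * (u+1) := by
  have hu0 : 0 < u := by linarith
  have hu1 : 0 < u + 1 := by linarith
  have h1 : Real.log (u / (u+1)) ≤ u/(u+1) - 1 := Real.log_le_sub_one_of_pos (by positivity)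
  rw [Real.log_div (ne_of_gt hu0) (ne_of_gt hu1)] at h1
  have h2 : u/(u+1) - 1 = -(1/(u+1)) := by field_simp; ring
  rw [h2] at h1
  have h3 : 1/(u+1) ≤ Real.log (u+1) - Real.log u := by linarith
  calc (1:ℝ) = (1/(u+1)) * (u+1) := by field_simp
  _ ≤ (Real.log (u+1) - Real.log u) * (u+1) := by
      apply mul_le_mul_of_nonneg_right h3 hu1.le

lemma convex_G (R L K Mv lo : ℝ) (hlo : 0 < lo) :
    ConvexOn ℝ (Icc lo R) (fun u => (R + u) * (L - Real.log u) - K * (Mv - u)) := by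
  have hi : interior (Icc lo R) = Ioo lo R := interior_Icc
  apply convexOn_of_hasDerivWithinAt2_nonneg (convex_Icc lo R)
    (f' := fun u => (L - Real.log u) - (R + u) * u⁻¹ + K)
    (f'' := fun u => (R - u) / u^2)
  · apply ContinuousOn.sub
    · apply ContinuousOn.mul
      · exact (continuous_const.add continuous_id).continuousOn
      · exact continuousOn_const.sub
          (Real.continuousOn_log.mono (fun x hx => by
            simp only [Set.mem_compl_iff, Set.mem_singleton_iff]
            exact ne_of_gt (lt_of_lt_of_le hlo hx.1)))
    · exact (continuous_const.mul (continuous_const.sub continuous_id)).continuousOn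
  · intro x hx
    rw [hi] at hx
    have hx0 : 0 < x := lt_of_lt_of_le hlo hx.1.le
    have h1 : HasDerivAt (fun u : ℝ => (R + u) * (L - Real.log u))
        (1 * (L - Real.log x) + (R + x) * (-x⁻¹)) x := by
      exact ((hasDerivAt_id x).const_add R).mul
        (((Real.hasDerivAt_log (ne_of_gt hx0)).const_sub L))
    have h2 : HasDerivAt (fun u : ℝ => K * (Mv - u)) (K * (-1)) x :=
      (((hasDerivAt_id x).const_sub Mv)).const_mul K
    have h3 := h1.sub h2
    have heq : 1 * (L - Real.log x) + (R + x) * (-x⁻¹) - K * (-1)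
        = (L - Real.log x) - (R + x) * x⁻¹ + K := by ring
    rw [heq] at h3
    exact h3.hasDerivWithinAt
  · intro x hx
    rw [hi] at hx
    have hx0 : 0 < x := lt_of_lt_of_le hlo hx.1.le
    have ha : HasDerivAt (fun u : ℝ => L - Real.log u) (-x⁻¹) x := by
      have := (Real.hasDerivAt_log (ne_of_gt hx0)).const_sub L
      simpa using this
    have hb : HasDerivAt (fun u : ℝ => (R + u) * u⁻¹)
        (1 * x⁻¹ + (R + x) * (-(x^2)⁻¹)) x :=
      ((hasDerivAt_id x).const_add R).mul (hasDerivAt_inv (ne_of_gt hx0))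
    have h1 : HasDerivAt (fun u : ℝ => (L - Real.log u) - (R + u) * u⁻¹ + K)
        ((-x⁻¹) - (1 * x⁻¹ + (R + x) * (-(x^2)⁻¹))) x := (ha.sub hb).add_const K
    have heq : (-x⁻¹) - (1 * x⁻¹ + (R + x) * (-(x^2)⁻¹)) = (R - x) / x^2 := by
      field_simp
      ring
    rw [heq] at h1
    exact h1.hasDerivWithinAt
  · intro x hx
    rw [hi] at hx
    have hx0 : 0 < x := lt_of_lt_of_le hlo hx.1.le
    apply div_nonneg (by linarith [hx.2]) (by positivity)

lemma tele' (B m n : ℕ) (hmn : m ≤ n) :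
    ∑ x ∈ Finset.Ico m n, (Real.log ((B:ℝ)+1-(x:ℝ)) - Real.log ((B:ℝ)-(x:ℝ)))
      = Real.log ((B:ℝ)+1-(m:ℝ)) - Real.log ((B:ℝ)+1-(n:ℝ)) := by
  have key : ∀ x : ℕ, Real.log ((B:ℝ)+1-(x:ℝ)) - Real.log ((B:ℝ)-(x:ℝ))
      = (fun k : ℕ => Real.log ((B:ℝ)+1-(k:ℝ))) x
        - (fun k : ℕ => Real.log ((B:ℝ)+1-(k:ℝ))) (x+1) := by
    intro x; push_cast; ring_nf
  rw [Finset.sum_congr rfl (fun x _ => key x), Finset.sum_Ico_eq_sub _ hmn,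
    Finset.sum_range_sub', Finset.sum_range_sub']
  simp

lemma sumkey (B m n : ℕ) (hmn : m ≤ n) (hnB : n ≤ B) (C : ℝ) :
    ∑ x ∈ Finset.Ico m n, (Real.log ((B:ℝ)+1-(x:ℝ)) - Real.log ((B:ℝ)-(x:ℝ))) * (C + x)
      ≤ (C + B + 1) * (Real.log ((B:ℝ)+1-(m:ℝ)) - Real.log ((B:ℝ)+1-(n:ℝ))) - ((n:ℝ) - m) := by
  have step : ∀ x ∈ Finset.Ico m n,
      (Real.log ((B:ℝ)+1-(x:ℝ)) - Real.log ((B:ℝ)-(x:ℝ))) * (C + x)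
      ≤ (C + B + 1) * (Real.log ((B:ℝ)+1-(x:ℝ)) - Real.log ((B:ℝ)-(x:ℝ))) - 1 := by
    intro x hx
    rw [Finset.mem_Ico] at hx
    have hxB : x + 1 ≤ B := Nat.succ_le_of_lt (lt_of_lt_of_le hx.2 hnB)
    have hu : (1:ℝ) ≤ (B:ℝ) - x := by
      have : (x:ℝ) + 1 ≤ (B:ℝ) := by exact_mod_cast Nat.cast_le.mpr hxB
      linarith
    have hls := logstep hu
    have he : (B:ℝ) - x + 1 = (B:ℝ) + 1 - x := by ring
    rw [he] at hls
    nlinarith [hls]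
  calc ∑ x ∈ Finset.Ico m n, (Real.log ((B:ℝ)+1-(x:ℝ)) - Real.log ((B:ℝ)-(x:ℝ))) * (C + x)
      ≤ ∑ x ∈ Finset.Ico m n,
        ((C + B + 1) * (Real.log ((B:ℝ)+1-(x:ℝ)) - Real.log ((B:ℝ)-(x:ℝ))) - 1) :=
        Finset.sum_le_sum step
    _ = (C + B + 1) * (Real.log ((B:ℝ)+1-(m:ℝ)) - Real.log ((B:ℝ)+1-(n:ℝ))) - ((n:ℝ) - m) := by
        rw [Finset.sum_sub_distrib, ← Finset.mul_sum, tele' B m n hmn]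
        simp [Nat.card_Ico]
        rw [Nat.cast_sub hmn]
section dc
variable {n : ℕ} {δ : ℝ} {p f : Fin n → ℝ}
  (hδ0 : 0 ≤ δ) (hδ1 : δ < 1) (hp0 : ∀ i, 0 ≤ p i) (hp1 : ∑ i, p i = 1)
  (hf : ∀ i, 0 ≤ f i)

include hδ0 hδ1 hp0 hp1 hf in
lemma dcvar_term_nonneg (t : ℝ) : 0 ≤ t + (1 - δ)⁻¹ * ∑ i, p i * max (f i - t) 0 := by
  have hS : 0 ≤ ∑ i, p i * max (f i - t) 0 :=
    Finset.sum_nonneg (fun i _ => mul_nonneg (hp0 i) (le_max_right _ _))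
  have hd : 0 < 1 - δ := by linarith
  rcases le_or_gt 0 t with ht | ht
  · positivity
  · have hS2 : -t ≤ ∑ i, p i * max (f i - t) 0 := by
      calc -t = ∑ i, p i * (-t) := by rw [← Finset.sum_mul, hp1, one_mul]
      _ ≤ ∑ i, p i * max (f i - t) 0 := by
          apply Finset.sum_le_sum
          intro i _
          apply mul_le_mul_of_nonneg_left _ (hp0 i)
          have := hf i
          calc -t ≤ f i - t := by linarith
          _ ≤ max (f i - t) 0 := le_max_left _ _
    have hinv : 1 ≤ (1 - δ)⁻¹ := by
      rw [le_inv_comm₀ (by norm_num) hd]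
      · linarith
    nlinarith [mul_le_mul_of_nonneg_right hinv hS]

include hδ0 hδ1 hp0 hp1 hf in
lemma dcvar_le (t : ℝ) :
    dcvar δ p f ≤ t + (1 - δ)⁻¹ * ∑ i, p i * max (f i - t) 0 := by
  rw [dcvar, if_neg (by linarith : δ ≠ 1)]
  exact ciInf_le ⟨0, by rintro y ⟨t', rfl⟩; exact dcvar_term_nonneg hδ0 hδ1 hp0 hp1 hf t'⟩ t

include hδ0 hδ1 hp0 hp1 hf in
lemma dcvar_nonneg : 0 ≤ dcvar δ p f := by
  rw [dcvar, if_neg (by linarith : δ ≠ 1)]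
  exact le_ciInf (dcvar_term_nonneg hδ0 hδ1 hp0 hp1 hf)

end dc
noncomputable def pstrat (B : ℕ) : Fin B → ℝ :=
  fun x => (Real.log ((B:ℝ)+1-(x:ℕ)) - Real.log ((B:ℝ)-(x:ℕ))) / Real.log ((B:ℝ)+1)

lemma sum_eval (B : ℕ) (s : Fin B) (t : ℝ) :
    ∑ i : Fin B, pstrat B i * max (dsrCost B s i - t) 0
      = (1 / Real.log ((B:ℝ)+1)) * ∑ x ∈ Finset.range B,
        (Real.log ((B:ℝ)+1-(x:ℝ)) - Real.log ((B:ℝ)-(x:ℝ)))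
          * max ((if x ≤ (s:ℕ) then (B:ℝ) + x else (s:ℕ)+1) - t) 0 := by
  set g : ℕ → ℝ := fun x => 1 / Real.log ((B:ℝ)+1) *
      ((Real.log ((B:ℝ)+1-(x:ℝ)) - Real.log ((B:ℝ)-(x:ℝ)))
        * max ((if x ≤ (s:ℕ) then (B:ℝ) + x else (s:ℕ)+1) - t) 0) with hg
  calc ∑ i : Fin B, pstrat B i * max (dsrCost B s i - t) 0
      = ∑ i : Fin B, g (i:ℕ) := by
        apply Finset.sum_congr rfl
        intro i _
        simp only [hg, pstrat, dsrCost]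
        ring
    _ = ∑ x ∈ Finset.range B, g x := Fin.sum_univ_eq_sum_range g B
    _ = _ := by rw [Finset.mul_sum]

lemma win_A (B : ℕ) (s : Fin B) :
    ∑ x ∈ Finset.range B,
        (Real.log ((B:ℝ)+1-(x:ℝ)) - Real.log ((B:ℝ)-(x:ℝ)))
          * max ((if x ≤ (s:ℕ) then (B:ℝ) + x else (s:ℕ)+1) - ((s:ℕ)+1)) 0
      = ∑ x ∈ Finset.Ico 0 ((s:ℕ)+1),
        (Real.log ((B:ℝ)+1-(x:ℝ)) - Real.log ((B:ℝ)-(x:ℝ)))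
          * (((B:ℝ) - ((s:ℕ)+1)) + x) := by
  have hsB : (s:ℕ) + 1 ≤ B := s.2
  rw [Finset.range_eq_Ico, ← Finset.sum_Ico_consecutive _ (Nat.zero_le ((s:ℕ)+1)) hsB]
  have h2 : ∑ x ∈ Finset.Ico ((s:ℕ)+1) B,
      (Real.log ((B:ℝ)+1-(x:ℝ)) - Real.log ((B:ℝ)-(x:ℝ)))
        * max ((if x ≤ (s:ℕ) then (B:ℝ) + x else (s:ℕ)+1) - ((s:ℕ)+1)) 0 = 0 := by
    apply Finset.sum_eq_zero
    intro x hx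
    rw [Finset.mem_Ico] at hx
    rw [if_neg (by omega)]
    simp
  rw [h2, add_zero]
  apply Finset.sum_congr rfl
  intro x hx
  rw [Finset.mem_Ico] at hx
  have hxs : x ≤ (s:ℕ) := by omega
  rw [if_pos hxs]
  have hBs : ((s:ℕ):ℝ) + 1 ≤ (B:ℝ) := by exact_mod_cast hsB
  have hxpos : (0:ℝ) ≤ (B:ℝ) + x - ((s:ℕ)+1) := by
    have : (0:ℝ) ≤ (x:ℝ) := Nat.cast_nonneg x
    linarith
  rw [max_eq_left hxpos]
  ring

lemma win_B (B a : ℕ) (s : Fin B) (has : a ≤ (s:ℕ)) :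
    ∑ x ∈ Finset.range B,
        (Real.log ((B:ℝ)+1-(x:ℝ)) - Real.log ((B:ℝ)-(x:ℝ)))
          * max ((if x ≤ (s:ℕ) then (B:ℝ) + x else (s:ℕ)+1) - ((B:ℝ)+a)) 0
      = ∑ x ∈ Finset.Ico (a+1) ((s:ℕ)+1),
        (Real.log ((B:ℝ)+1-(x:ℝ)) - Real.log ((B:ℝ)-(x:ℝ)))
          * ((-(a:ℝ)) + x) := by
  have hsB : (s:ℕ) + 1 ≤ B := s.2
  have ha1 : a + 1 ≤ (s:ℕ) + 1 := by omega
  rw [Finset.range_eq_Ico, ← Finset.sum_Ico_consecutive _ (Nat.zero_le ((s:ℕ)+1)) hsB,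
    ← Finset.sum_Ico_consecutive _ (Nat.zero_le (a+1)) ha1]
  have h3 : ∑ x ∈ Finset.Ico ((s:ℕ)+1) B,
      (Real.log ((B:ℝ)+1-(x:ℝ)) - Real.log ((B:ℝ)-(x:ℝ)))
        * max ((if x ≤ (s:ℕ) then (B:ℝ) + x else (s:ℕ)+1) - ((B:ℝ)+a)) 0 = 0 := by
    apply Finset.sum_eq_zero
    intro x hx
    rw [Finset.mem_Ico] at hx
    rw [if_neg (by omega)]
    have hle : ((s:ℕ):ℝ) + 1 - ((B:ℝ)+a) ≤ 0 := by
      have h1 : ((s:ℕ):ℝ) + 1 ≤ (B:ℝ) := by exact_mod_cast hsB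
      have : (0:ℝ) ≤ (a:ℝ) := Nat.cast_nonneg a
      linarith
    rw [max_eq_right hle, mul_zero]
  have h1 : ∑ x ∈ Finset.Ico 0 (a+1),
      (Real.log ((B:ℝ)+1-(x:ℝ)) - Real.log ((B:ℝ)-(x:ℝ)))
        * max ((if x ≤ (s:ℕ) then (B:ℝ) + x else (s:ℕ)+1) - ((B:ℝ)+a)) 0 = 0 := by
    apply Finset.sum_eq_zero
    intro x hx
    rw [Finset.mem_Ico] at hx
    rw [if_pos (by omega)]
    have hle : (B:ℝ) + x - ((B:ℝ)+a) ≤ 0 := by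
      have : (x:ℝ) ≤ (a:ℝ) := by exact_mod_cast Nat.cast_le.mpr (by omega : x ≤ a)
      linarith
    rw [max_eq_right hle, mul_zero]
  rw [h3, add_zero, h1, zero_add]
  apply Finset.sum_congr rfl
  intro x hx
  rw [Finset.mem_Ico] at hx
  rw [if_pos (by omega)]
  have hge : (0:ℝ) ≤ (B:ℝ) + x - ((B:ℝ)+a) := by
    have : (a:ℝ) + 1 ≤ (x:ℝ) := by exact_mod_cast Nat.cast_le.mpr (hx.1 : a+1 ≤ x)
    linarith
  rw [max_eq_left hge]
  ring

lemma logM_pos {B : ℕ} (hB : 1 ≤ B) : 0 < Real.log ((B:ℝ)+1) := by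
  apply Real.log_pos
  have : (1:ℝ) ≤ (B:ℝ) := by exact_mod_cast hB
  linarith

lemma pstrat_nonneg (B : ℕ) (hB : 1 ≤ B) (x : Fin B) : 0 ≤ pstrat B x := by
  have hx : (x:ℕ) + 1 ≤ B := x.2
  have hx1 : ((x:ℕ):ℝ) + 1 ≤ (B:ℝ) := by exact_mod_cast hx
  apply div_nonneg _ (logM_pos hB).le
  have h1 : (0:ℝ) < (B:ℝ) - (x:ℕ) := by linarith
  have h2 : (B:ℝ) - (x:ℕ) ≤ (B:ℝ)+1-(x:ℕ) := by linarith
  linarith [Real.log_le_log h1 h2]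

lemma pstrat_sum (B : ℕ) (hB : 1 ≤ B) : ∑ i, pstrat B i = 1 := by
  set f : ℕ → ℝ := fun x => (Real.log ((B:ℝ)+1-(x:ℝ)) - Real.log ((B:ℝ)-(x:ℝ)))
          / Real.log ((B:ℝ)+1) with hf
  have h0 : ∑ i : Fin B, pstrat B i = ∑ i : Fin B, f (i:ℕ) :=
    Finset.sum_congr rfl (fun i _ => rfl)
  have h1 : ∑ i : Fin B, f (i:ℕ) = ∑ x ∈ Finset.range B, f x := Fin.sum_univ_eq_sum_range f B
  rw [h0, h1, hf, ← Finset.sum_div, Finset.range_eq_Ico, tele' B 0 B (Nat.zero_le B)]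
  simp only [Nat.cast_zero, sub_zero]
  have : (B:ℝ) + 1 - (B:ℝ) = 1 := by ring
  rw [this, Real.log_one, sub_zero, div_self (ne_of_gt (logM_pos hB))]

lemma caseB_core (c wr Ar : ℝ) (hc1 : 1 < c) (hlogρ : Real.log (1+2*c) = c)
    (hwr : 1 ≤ wr) (hge : (1+2*c)*wr ≤ Ar) (hlt : Ar < (1+2*c)*wr + 1) :
    Ar * (Real.log (Ar - 1) - Real.log wr) ≤ c * (Ar - 2*wr) + (Ar - wr - 1) := by
  have hwr0 : 0 < wr := by linarith
  have hρ3 : (3:ℝ) < 1+2*c := by linarith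
  have hρw : (3:ℝ) < (1+2*c)*wr := by nlinarith
  have hρwpos : (0:ℝ) < (1+2*c)*wr := by linarith
  have hA3 : (3:ℝ) < Ar := by linarith
  have hA1pos : (0:ℝ) < Ar - 1 := by linarith
  have hlog : Real.log (Ar-1) - Real.log wr ≤ c + ((Ar-1)/((1+2*c)*wr) - 1) := by
    have e1 : Real.log (Ar-1) - Real.log wr = Real.log ((Ar-1)/wr) :=
      (Real.log_div (ne_of_gt hA1pos) (ne_of_gt hwr0)).symm
    have e2 : (Ar-1)/wr = (1+2*c) * ((Ar-1)/((1+2*c)*wr)) := by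
      field_simp
    rw [e1, e2, Real.log_mul (by positivity) (by positivity), hlogρ]
    have := Real.log_le_sub_one_of_pos (show (0:ℝ) < (Ar-1)/((1+2*c)*wr) by positivity)
    linarith
  have hq : Ar * ((Ar-1)/((1+2*c)*wr) - 1) ≤ Ar - 1 - (1+2*c)*wr := by
    have e : (Ar-1)/((1+2*c)*wr) - 1 = (Ar - 1 - (1+2*c)*wr)/((1+2*c)*wr) := by
      field_simp
    rw [e, ← mul_div_assoc, div_le_iff₀ hρwpos]
    nlinarith [mul_nonneg (sub_nonneg.2 hge) (by linarith : (0:ℝ) ≤ (1+2*c)*wr + 1 - Ar)]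
  have hmul : Ar * (Real.log (Ar-1) - Real.log wr)
      ≤ Ar * (c + ((Ar-1)/((1+2*c)*wr) - 1)) :=
    mul_le_mul_of_nonneg_left hlog (by linarith)
  nlinarith [hq, hmul]

lemma Gustar_le (Br c : ℝ) (h3 : 3 ≤ Br) (hc1 : 1 < c) (hc32 : c < 3/2) :
    (Br + (Br+1)/(1+2*c)) * c - (1 + c*(Br-1)/Br) * ((Br+1) - (Br+1)/(1+2*c)) ≤ 0 := by
  have hρ : (0:ℝ) < 1+2*c := by linarith
  have hBr : (0:ℝ) < Br := by linarith
  have e : (Br + (Br+1)/(1+2*c)) * c - (1 + c*(Br-1)/Br) * ((Br+1) - (Br+1)/(1+2*c))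
      = c*(2*c - Br)/((1+2*c)*Br) := by
    field_simp
    ring
  rw [e]
  apply div_nonpos_of_nonpos_of_nonneg
  · nlinarith
  · positivity

lemma GB_le (Br c : ℝ) (h3 : 3 ≤ Br) (hc98 : 9/8 < c) :
    (Br + Br) * (Real.log (Br+1) - Real.log Br) - (1 + c*(Br-1)/Br) * ((Br+1) - Br) ≤ 0 := by
  have hBr : (0:ℝ) < Br := by linarith
  have hz1 : (1:ℝ) ≤ (Br+1)/Br := by
    rw [le_div_iff₀ hBr]; linarith
  have hch := log_chord hz1
  rw [Real.log_div (by linarith) (ne_of_gt hBr), inv_div] at hch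
  have h2 := mul_le_mul_of_nonneg_left hch hBr.le
  have h3' : Br * ((Br+1)/Br - Br/(Br+1)) = (2*Br+1)/(Br+1) := by
    field_simp
    ring
  rw [h3'] at h2
  have h4 : (2*Br+1)/(Br+1) ≤ 1 + c*(Br-1)/Br := by
    have e : 1 + c*(Br-1)/Br - (2*Br+1)/(Br+1) = (c*(Br^2-1) - Br^2)/(Br*(Br+1)) := by
      field_simp
      ring
    have hB9 : (9:ℝ) ≤ Br^2 := by nlinarith
    have hnum : 0 ≤ c*(Br^2-1) - Br^2 := by nlinarith
    have : 0 ≤ (c*(Br^2-1) - Br^2)/(Br*(Br+1)) := by positivity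
    linarith [e ▸ this]
  nlinarith [h2, h4]
lemma G_nonpos (R L K Mv lo x : ℝ) (hlo : 0 < lo) (hloR : lo < R)
    (hx1 : lo ≤ x) (hx2 : x ≤ R)
    (h1 : (R + lo) * (L - Real.log lo) - K * (Mv - lo) ≤ 0)
    (h2 : (R + R) * (L - Real.log R) - K * (Mv - R) ≤ 0) :
    (R + x) * (L - Real.log x) - K * (Mv - x) ≤ 0 := by
  have hden : 0 < R - lo := by linarith
  have hconv := convex_G R L K Mv lo hlo
  have hlam0 : 0 ≤ (R - x)/(R - lo) := by
    apply div_nonneg (by linarith) hden.le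
  have hmu0 : 0 ≤ (x - lo)/(R - lo) := by
    apply div_nonneg (by linarith) hden.le
  have hsum : (R - x)/(R - lo) + (x - lo)/(R - lo) = 1 := by
    field_simp
    ring
  have hcomb := hconv.2 (Set.mem_Icc.2 ⟨le_refl lo, hloR.le⟩)
    (Set.mem_Icc.2 ⟨hloR.le, le_refl R⟩) hlam0 hmu0 hsum
  simp only [smul_eq_mul] at hcomb
  have he : (R - x)/(R - lo) * lo + (x - lo)/(R - lo) * R = x := by
    field_simp
    ring
  rw [he] at hcomb
  have hL : (R - x)/(R - lo) * ((R + lo) * (L - Real.log lo) - K * (Mv - lo)) ≤ 0 :=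
    mul_nonpos_of_nonneg_of_nonpos hlam0 h1
  have hM : (x - lo)/(R - lo) * ((R + R) * (L - Real.log R) - K * (Mv - R)) ≤ 0 :=
    mul_nonpos_of_nonneg_of_nonpos hmu0 h2
  calc (R + x) * (L - Real.log x) - K * (Mv - x) ≤ _ := hcomb
    _ ≤ 0 := by linarith
set_option maxHeartbeats 2000000 in
lemma core_lt (B : ℕ) (hB : 3 ≤ B) (c δ : ℝ) (hc : 0 < c)
    (hce : Real.exp c = 1 + 2 * c) (hδ0 : 0 ≤ δ) (hδ1 : δ < 1)
    (hkey : c / Real.log ((B:ℝ)+1) < 1 - δ) (s : Fin B) :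
    dcvar δ (pstrat B) (dsrCost B s) < (2 - 1/(B:ℝ)) * ((s:ℕ)+1) := by
  have hc1 : 1 < c := c_gt_one hc hce
  have hc98 : 9/8 < c := c_gt_98 hc hce
  have hc32 : c < 3/2 := c_lt_32 hc hce
  have hB1 : 1 ≤ B := by omega
  have hBr3 : (3:ℝ) ≤ (B:ℝ) := by exact_mod_cast hB
  have hsB : (s:ℕ) + 1 ≤ B := s.isLt
  have hτB : ((s:ℕ):ℝ) + 1 ≤ (B:ℝ) := by exact_mod_cast hsB
  have hwr1 : (1:ℝ) ≤ (B:ℝ) - ((s:ℕ):ℝ) := by linarith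
  have hlM : 0 < Real.log ((B:ℝ)+1) := logM_pos hB1
  have hη : 0 < 1 - δ := by linarith
  have hρc : Real.log (1+2*c) = c := by rw [← hce, Real.log_exp]
  have hcost : ∀ i, 0 ≤ dsrCost B s i := by
    intro i
    rw [dsrCost]
    split <;> positivity
  have hp0 : ∀ i, 0 ≤ pstrat B i := pstrat_nonneg B hB1
  have hp1 : ∑ i, pstrat B i = 1 := pstrat_sum B hB1
  have hτpos : (0:ℝ) < ((s:ℕ):ℝ) + 1 := by positivity
  by_cases hreg : (1+2*c) * ((B:ℝ) - ((s:ℕ):ℝ)) ≤ (B:ℝ)+1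
  · -- B-regime : buy-threshold CVaR anchor
    have hρwpos : (0:ℝ) < (1+2*c) * ((B:ℝ) - ((s:ℕ):ℝ)) := by nlinarith
    set A' : ℕ := ⌈(1+2*c) * ((B:ℝ) - ((s:ℕ):ℝ))⌉₊ with hA'def
    have hge : (1+2*c) * ((B:ℝ) - ((s:ℕ):ℝ)) ≤ (A':ℝ) := Nat.le_ceil _
    have hlt : (A':ℝ) < (1+2*c) * ((B:ℝ) - ((s:ℕ):ℝ)) + 1 :=
      Nat.ceil_lt_add_one hρwpos.le
    have hA'leB : A' ≤ B + 1 := by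
      rw [hA'def, Nat.ceil_le]
      push_cast
      linarith
    have hA3 : (3:ℝ) < (A':ℝ) := by nlinarith
    have hcastw : ((B - (s:ℕ) : ℕ) : ℝ) = (B:ℝ) - ((s:ℕ):ℝ) := by
      push_cast [Nat.cast_sub (by omega : (s:ℕ) ≤ B)]
      ring
    have hwn1A : B - (s:ℕ) + 1 ≤ A' := by
      have h1 : ((B - (s:ℕ) : ℕ) : ℝ) + 1 ≤ (A':ℝ) := by
        rw [hcastw]; nlinarith
      exact_mod_cast h1
    set a : ℕ := B + 1 - A' with hadef
    have haR : (a:ℝ) = (B:ℝ) + 1 - (A':ℝ) := by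
      rw [hadef]
      push_cast [Nat.cast_sub hA'leB]
      ring
    have has : a ≤ (s:ℕ) := by omega
    have hd := dcvar_le hδ0 hδ1 hp0 hp1 hcost ((B:ℝ) + (a:ℕ))
    rw [sum_eval B s ((B:ℝ) + (a:ℕ)), win_B B a s has] at hd
    have hT1 : ∑ x ∈ Finset.Ico (a+1) ((s:ℕ)+1),
        (Real.log ((B:ℝ)+1-(x:ℝ)) - Real.log ((B:ℝ)-(x:ℝ))) * ((-(a:ℝ)) + x)
        ≤ c * ((A':ℝ) - 2*((B:ℝ) - ((s:ℕ):ℝ))) := by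
      have hs1 := sumkey B (a+1) ((s:ℕ)+1) (by omega) hsB (-(a:ℝ))
      have e1 : (-(a:ℝ) + (B:ℝ) + 1) = (A':ℝ) := by rw [haR]; ring
      have e2 : ((B:ℝ)+1-((a+1:ℕ):ℝ)) = (A':ℝ) - 1 := by push_cast [haR]; ring
      have e3 : ((B:ℝ)+1-(((s:ℕ)+1:ℕ):ℝ)) = (B:ℝ) - ((s:ℕ):ℝ) := by push_cast; ring
      have e4 : ((((s:ℕ)+1:ℕ)):ℝ) - ((a+1:ℕ):ℝ)
          = (A':ℝ) - ((B:ℝ) - ((s:ℕ):ℝ)) - 1 := by push_cast [haR]; ring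
      rw [e1, e2, e3, e4] at hs1
      have hcb := caseB_core c ((B:ℝ) - ((s:ℕ):ℝ)) (A':ℝ) hc1 hρc hwr1 hge hlt
      linarith
    have hA2w : 0 < (A':ℝ) - 2*((B:ℝ) - ((s:ℕ):ℝ)) := by
      have hml := mul_le_mul_of_nonneg_left hwr1 (by linarith : (0:ℝ) ≤ 2*c - 1)
      have hexp : (1+2*c)*((B:ℝ) - ((s:ℕ):ℝ))
          = 2*((B:ℝ) - ((s:ℕ):ℝ)) + (2*c-1)*((B:ℝ) - ((s:ℕ):ℝ)) := by ring
      rw [mul_one] at hml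
      linarith [hge]
    have hS : (1 / Real.log ((B:ℝ)+1)) * ∑ x ∈ Finset.Ico (a+1) ((s:ℕ)+1),
        (Real.log ((B:ℝ)+1-(x:ℝ)) - Real.log ((B:ℝ)-(x:ℝ))) * ((-(a:ℝ)) + x)
        < (1-δ) * ((A':ℝ) - 2*((B:ℝ) - ((s:ℕ):ℝ))) := by
      have h1 := mul_le_mul_of_nonneg_left hT1 (by positivity :
        (0:ℝ) ≤ 1 / Real.log ((B:ℝ)+1))
      have h2 : (1 / Real.log ((B:ℝ)+1)) * (c * ((A':ℝ) - 2*((B:ℝ) - ((s:ℕ):ℝ))))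
          = (c / Real.log ((B:ℝ)+1)) * ((A':ℝ) - 2*((B:ℝ) - ((s:ℕ):ℝ))) := by ring
      have h3 := mul_lt_mul_of_pos_right hkey hA2w
      linarith
    have hfin : dcvar δ (pstrat B) (dsrCost B s)
        < ((B:ℝ) + (a:ℕ)) + ((A':ℝ) - 2*((B:ℝ) - ((s:ℕ):ℝ))) := by
      have h4 := mul_lt_mul_of_pos_left hS (by positivity : (0:ℝ) < (1-δ)⁻¹)
      rw [inv_mul_cancel_left₀ (ne_of_gt hη)] at h4
      calc dcvar δ (pstrat B) (dsrCost B s) ≤ _ := hd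
        _ < ((B:ℝ) + (a:ℕ)) + ((A':ℝ) - 2*((B:ℝ) - ((s:ℕ):ℝ))) := by linarith
    have hend : ((B:ℝ) + (a:ℕ)) + ((A':ℝ) - 2*((B:ℝ) - ((s:ℕ):ℝ)))
        ≤ (2 - 1/(B:ℝ)) * (((s:ℕ):ℝ)+1) := by
      rw [haR]
      have hBpos : (0:ℝ) < (B:ℝ) := by linarith
      have e : ((B:ℝ) + ((B:ℝ) + 1 - (A':ℝ))) + ((A':ℝ) - 2*((B:ℝ) - ((s:ℕ):ℝ)))
          = 2*(((s:ℕ):ℝ)+1) - 1 := by ring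
      rw [e]
      have h5 : (((s:ℕ):ℝ)+1) / (B:ℝ) ≤ 1 := by
        rw [div_le_one hBpos]; exact hτB
      have e2 : (2 - 1/(B:ℝ)) * (((s:ℕ):ℝ)+1)
          = 2*(((s:ℕ):ℝ)+1) - (((s:ℕ):ℝ)+1)/(B:ℝ) := by ring
      rw [e2]
      linarith
    exact hfin.trans_le hend
  · -- A-regime : rent-threshold CVaR anchor
    push_neg at hreg
    have hlo : (0:ℝ) < ((B:ℝ)+1)/(1+2*c) := by positivity
    have hlox : ((B:ℝ)+1)/(1+2*c) < (B:ℝ) - ((s:ℕ):ℝ) := by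
      rw [div_lt_iff₀ (by linarith : (0:ℝ) < 1+2*c)]
      nlinarith [hreg]
    have hxR : (B:ℝ) - ((s:ℕ):ℝ) ≤ (B:ℝ) := by
      have : (0:ℝ) ≤ ((s:ℕ):ℝ) := Nat.cast_nonneg _
      linarith
    have hloR : ((B:ℝ)+1)/(1+2*c) < (B:ℝ) := lt_of_lt_of_le hlox hxR
    have hlogu : Real.log (((B:ℝ)+1)/(1+2*c)) = Real.log ((B:ℝ)+1) - c := by
      rw [Real.log_div (by positivity) (by positivity), hρc]
    have h1 : ((B:ℝ) + ((B:ℝ)+1)/(1+2*c))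
          * (Real.log ((B:ℝ)+1) - Real.log (((B:ℝ)+1)/(1+2*c)))
        - (1 + c*((B:ℝ)-1)/(B:ℝ)) * (((B:ℝ)+1) - ((B:ℝ)+1)/(1+2*c)) ≤ 0 := by
      rw [hlogu]
      have := Gustar_le (B:ℝ) c hBr3 hc1 hc32
      calc ((B:ℝ) + ((B:ℝ)+1)/(1+2*c)) * (Real.log ((B:ℝ)+1) - (Real.log ((B:ℝ)+1) - c))
            - (1 + c*((B:ℝ)-1)/(B:ℝ)) * (((B:ℝ)+1) - ((B:ℝ)+1)/(1+2*c))
          = ((B:ℝ) + ((B:ℝ)+1)/(1+2*c)) * c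
            - (1 + c*((B:ℝ)-1)/(B:ℝ)) * (((B:ℝ)+1) - ((B:ℝ)+1)/(1+2*c)) := by ring
        _ ≤ 0 := this
    have h2 : ((B:ℝ) + (B:ℝ)) * (Real.log ((B:ℝ)+1) - Real.log (B:ℝ))
        - (1 + c*((B:ℝ)-1)/(B:ℝ)) * (((B:ℝ)+1) - (B:ℝ)) ≤ 0 :=
      GB_le (B:ℝ) c hBr3 hc98
    have hG := G_nonpos (B:ℝ) (Real.log ((B:ℝ)+1)) (1 + c*((B:ℝ)-1)/(B:ℝ))
      ((B:ℝ)+1) (((B:ℝ)+1)/(1+2*c)) ((B:ℝ) - ((s:ℕ):ℝ)) hlo hloR hlox.le hxR h1 h2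
    have hT1 : ∑ x ∈ Finset.Ico 0 ((s:ℕ)+1),
        (Real.log ((B:ℝ)+1-(x:ℝ)) - Real.log ((B:ℝ)-(x:ℝ)))
          * (((B:ℝ) - (((s:ℕ):ℝ)+1)) + x)
        ≤ c * (((B:ℝ)-1)/(B:ℝ) * (((s:ℕ):ℝ)+1)) := by
      have hs1 := sumkey B 0 ((s:ℕ)+1) (Nat.zero_le _) hsB ((B:ℝ) - (((s:ℕ):ℝ)+1))
      have e1 : ((B:ℝ) - (((s:ℕ):ℝ)+1) + (B:ℝ) + 1) = (B:ℝ) + ((B:ℝ) - ((s:ℕ):ℝ)) := by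
        ring
      have e2 : ((B:ℝ)+1-((0:ℕ):ℝ)) = (B:ℝ) + 1 := by push_cast; ring
      have e3 : ((B:ℝ)+1-(((s:ℕ)+1:ℕ):ℝ)) = (B:ℝ) - ((s:ℕ):ℝ) := by push_cast; ring
      have e4 : ((((s:ℕ)+1:ℕ)):ℝ) - ((0:ℕ):ℝ) = ((s:ℕ):ℝ) + 1 := by push_cast; ring
      rw [e1, e2, e3, e4] at hs1
      have eMx : ((B:ℝ)+1) - ((B:ℝ) - ((s:ℕ):ℝ)) = ((s:ℕ):ℝ) + 1 := by ring
      rw [eMx] at hG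
      calc ∑ x ∈ Finset.Ico 0 ((s:ℕ)+1),
          (Real.log ((B:ℝ)+1-(x:ℝ)) - Real.log ((B:ℝ)-(x:ℝ)))
            * (((B:ℝ) - (((s:ℕ):ℝ)+1)) + x)
          ≤ ((B:ℝ) + ((B:ℝ) - ((s:ℕ):ℝ)))
              * (Real.log ((B:ℝ)+1) - Real.log ((B:ℝ) - ((s:ℕ):ℝ))) - (((s:ℕ):ℝ)+1) := hs1
        _ = (((B:ℝ) + ((B:ℝ) - ((s:ℕ):ℝ)))
              * (Real.log ((B:ℝ)+1) - Real.log ((B:ℝ) - ((s:ℕ):ℝ)))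
              - (1 + c*((B:ℝ)-1)/(B:ℝ)) * (((s:ℕ):ℝ) + 1))
            + (c*((B:ℝ)-1)/(B:ℝ)) * (((s:ℕ):ℝ) + 1) := by ring
        _ ≤ (c*((B:ℝ)-1)/(B:ℝ)) * (((s:ℕ):ℝ) + 1) := by linarith [hG]
        _ = c * (((B:ℝ)-1)/(B:ℝ) * (((s:ℕ):ℝ)+1)) := by ring
    have hZpos : (0:ℝ) < ((B:ℝ)-1)/(B:ℝ) * (((s:ℕ):ℝ)+1) := by
      apply mul_pos _ hτpos
      apply div_pos (by linarith) (by linarith)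
    have hS : (1 / Real.log ((B:ℝ)+1)) * ∑ x ∈ Finset.Ico 0 ((s:ℕ)+1),
        (Real.log ((B:ℝ)+1-(x:ℝ)) - Real.log ((B:ℝ)-(x:ℝ)))
          * (((B:ℝ) - (((s:ℕ):ℝ)+1)) + x)
        < (1-δ) * (((B:ℝ)-1)/(B:ℝ) * (((s:ℕ):ℝ)+1)) := by
      have ha1 := mul_le_mul_of_nonneg_left hT1 (by positivity :
        (0:ℝ) ≤ 1 / Real.log ((B:ℝ)+1))
      have ha2 : (1 / Real.log ((B:ℝ)+1)) * (c * (((B:ℝ)-1)/(B:ℝ) * (((s:ℕ):ℝ)+1)))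
          = (c / Real.log ((B:ℝ)+1)) * (((B:ℝ)-1)/(B:ℝ) * (((s:ℕ):ℝ)+1)) := by ring
      have ha3 := mul_lt_mul_of_pos_right hkey hZpos
      linarith
    have hd := dcvar_le hδ0 hδ1 hp0 hp1 hcost (((s:ℕ):ℝ) + 1)
    rw [sum_eval B s (((s:ℕ):ℝ) + 1), win_A B s] at hd
    have hfin : dcvar δ (pstrat B) (dsrCost B s)
        < (((s:ℕ):ℝ) + 1) + ((B:ℝ)-1)/(B:ℝ) * (((s:ℕ):ℝ)+1) := by
      have h4 := mul_lt_mul_of_pos_left hS (by positivity : (0:ℝ) < (1-δ)⁻¹)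
      rw [inv_mul_cancel_left₀ (ne_of_gt hη)] at h4
      calc dcvar δ (pstrat B) (dsrCost B s) ≤ _ := hd
        _ < _ := by linarith
    have hend : (((s:ℕ):ℝ) + 1) + ((B:ℝ)-1)/(B:ℝ) * (((s:ℕ):ℝ)+1)
        = (2 - 1/(B:ℝ)) * (((s:ℕ):ℝ)+1) := by
      have hBne : (B:ℝ) ≠ 0 := by positivity
      field_simp
      ring
    rw [hend] at hfin
    exact hfin

lemma dsrCost_nonneg (B : ℕ) (s : Fin B) : ∀ i, 0 ≤ dsrCost B s i := by
  intro i
  rw [dsrCost]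
  split <;> positivity

lemma dsrRatio_nonneg {δ : ℝ} (hδ0 : 0 ≤ δ) (hδ1 : δ < 1) (B : ℕ)
    (q : {q : Fin B → ℝ // (∀ i, 0 ≤ q i) ∧ ∑ i, q i = 1}) (s : Fin B) :
    0 ≤ dsrRatio δ B (q : Fin B → ℝ) s := by
  apply div_nonneg
  · exact dcvar_nonneg hδ0 hδ1 q.2.1 q.2.2 (dsrCost_nonneg B s)
  · apply le_min
    · positivity
    · positivity

lemma dsrCR_nonneg {δ : ℝ} (hδ0 : 0 ≤ δ) (hδ1 : δ < 1) (B : ℕ) (hB : 0 < B)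
    (q : {q : Fin B → ℝ // (∀ i, 0 ≤ q i) ∧ ∑ i, q i = 1}) :
    0 ≤ dsrCR δ B (q : Fin B → ℝ) := by
  haveI : Nonempty (Fin B) := Fin.pos_iff_nonempty.mp hB
  obtain ⟨s⟩ := (inferInstance : Nonempty (Fin B))
  calc (0:ℝ) ≤ dsrRatio δ B (q : Fin B → ℝ) s := dsrRatio_nonneg hδ0 hδ1 B q s
    _ ≤ dsrCR δ B (q : Fin B → ℝ) :=
        le_ciSup (Set.Finite.bddAbove (Set.finite_range _)) s


/-- Theorem 6(i): for `δ < 1 - c/log(B+1)` (with `e^c = 1 + 2c`, `c > 0`) the optimal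
`δ`-CVaR competitive ratio for discrete-time ski rental strictly improves on the
deterministic optimum `2 - 1/B`. -/
theorem dsr_phase_transition_i (B : ℕ) (hB : 2 ≤ B) (c : ℝ) (hc : 0 < c)
    (hce : Real.exp c = 1 + 2 * c) (δ : ℝ) (hδ : δ ∈ Ico (0:ℝ) 1)
    (hsmall : δ < 1 - c / Real.log (B + 1)) :
    dsrOpt δ B < 2 - 1 / B := by
  obtain ⟨hδ0, hδ1⟩ := hδ
  rcases Nat.lt_or_ge B 3 with hB2 | hB3
  · -- B = 2 : the hypothesis is vacuous since log 3 < c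
    exfalso
    have hBeq : B = 2 := by omega
    subst hBeq
    have h3 : ((2:ℕ):ℝ) + 1 = 3 := by norm_num
    rw [h3] at hsmall
    have hl3 : (0:ℝ) < Real.log 3 := Real.log_pos (by norm_num)
    have hlc : Real.log 3 < c := log3_lt_c hc hce
    have : (1:ℝ) < c / Real.log 3 := (one_lt_div hl3).2 hlc
    linarith
  · haveI : Nonempty (Fin B) := Fin.pos_iff_nonempty.mp (by omega)
    have hlM : 0 < Real.log ((B:ℝ)+1) := logM_pos (by omega)
    have hkey : c / Real.log ((B:ℝ)+1) < 1 - δ := by linarith [hsmall]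
    have hratio : ∀ s : Fin B, dsrRatio δ B (pstrat B) s < 2 - 1/(B:ℝ) := by
      intro s
      rw [dsrRatio]
      have hsB : (s:ℕ) + 1 ≤ B := s.isLt
      have hτB : ((s:ℕ):ℝ) + 1 ≤ (B:ℝ) := by exact_mod_cast hsB
      rw [min_eq_left hτB]
      rw [div_lt_iff₀ (by positivity : (0:ℝ) < ((s:ℕ):ℝ) + 1)]
      exact core_lt B hB3 c δ hc hce hδ0 hδ1 hkey s
    have hCR : dsrCR δ B (pstrat B) < 2 - 1/(B:ℝ) := by
      obtain ⟨s₀, hs₀⟩ := Finite.exists_max (fun s : Fin B => dsrRatio δ B (pstrat B) s)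
      calc dsrCR δ B (pstrat B) ≤ dsrRatio δ B (pstrat B) s₀ := ciSup_le hs₀
        _ < 2 - 1/(B:ℝ) := hratio s₀
    have hmem : dsrOpt δ B ≤ dsrCR δ B (pstrat B) := by
      have hbdd : BddBelow (Set.range
          (fun q : {q : Fin B → ℝ // (∀ i, 0 ≤ q i) ∧ ∑ i, q i = 1} =>
            dsrCR δ B (q : Fin B → ℝ))) := by
        refine ⟨0, ?_⟩
        rintro y ⟨q, rfl⟩
        exact dsrCR_nonneg hδ0 hδ1 B (by omega) q
      exact ciInf_le hbdd ⟨pstrat B, pstrat_nonneg B (by omega), pstrat_sum B (by omega)⟩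
    exact lt_of_le_of_lt hmem hCR
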